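/- arXiv:0809.3813 — 3 statements merged into one kernel-verified Lean document; each statement's English description precedes it below -/
import Mathlib

section
/- For every dimension d ≥ 1, every integer t ≥ 1, and every nonempty finite subset X of U(d), equality holds in (1/|X|²) · ∑_{U,V ∈ X} |tr(U*V)|^{2t} ≥ ∫_{U(d)} |tr(U)|^{2t} dU if and only if X is a unitary t-design. -/
open MeasureTheory

noncomputable section

/-- `U(d)`: the group of `d × d` complex unitary matrices. -/
abbrev UG (d : ℕ) := Matrix.unitaryGroup (Fin d) ℂ

instance (d : ℕ) : MeasurableSpace (UG d) := borel _
instance (d : ℕ) : BorelSpace (UG d) := ⟨rfl⟩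

/-- `Hom(r,s)`: the complex span of the monomial functions on `U(d)` that are homogeneous of
degree `r` in the entries of `U` and of degree `s` in the entries of `U*` (conjugates). -/
def homSpace (d r s : ℕ) : Submodule ℂ (UG d → ℂ) :=
  Submodule.span ℂ
    {f : UG d → ℂ | ∃ (i j : Fin r → Fin d) (p q : Fin s → Fin d),
      f = fun U : UG d => (∏ k, (U : Matrix (Fin d) (Fin d) ℂ) (i k) (j k)) *
        ∏ k, (starRingEnd ℂ) ((U : Matrix (Fin d) (Fin d) ℂ) (p k) (q k))}

/-- A nonempty finite subset `X ⊆ U(d)` is a unitary `t`-design (with respect to the Haar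
probability measure `μ`) if it averages every `f ∈ Hom(t,t)` correctly. -/
def IsUnitaryDesign (d t : ℕ) (μ : Measure (UG d)) (X : Finset (UG d)) : Prop :=
  X.Nonempty ∧ ∀ f ∈ homSpace d t t,
    (1 / (X.card : ℂ)) * ∑ U ∈ X, f U = ∫ U, f U ∂μ

/-- `|tr(U* M)|²`, the squared trace inner product of two unitaries. -/
def trIP {d : ℕ} (U M : UG d) : ℝ :=
  ‖(Matrix.trace (star (U : Matrix (Fin d) (Fin d) ℂ) *
    (M : Matrix (Fin d) (Fin d) ℂ)))‖ ^ 2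

instance (d : ℕ) : SecondCountableTopology (Matrix (Fin d) (Fin d) ℂ) :=
  inferInstanceAs (SecondCountableTopology (Fin d → Fin d → ℂ))

instance (d : ℕ) : SecondCountableTopology (UG d) :=
  TopologicalSpace.Subtype.secondCountableTopology _

namespace DesignAux

abbrev Idx (d t : ℕ) :=
  ((Fin t → Fin d) × (Fin t → Fin d)) × ((Fin t → Fin d) × (Fin t → Fin d))

def vMap (d t : ℕ) (U : UG d) : EuclideanSpace ℂ (Idx d t) := WithLp.toLp 2 (fun x : Idx d t =>
  (∏ k, (U : Matrix (Fin d) (Fin d) ℂ) (x.1.1 k) (x.1.2 k)) *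
    (starRingEnd ℂ) (∏ k, (U : Matrix (Fin d) (Fin d) ℂ) (x.2.1 k) (x.2.2 k)))

variable {d t : ℕ}

lemma entry_abs_le_one (U : UG d) (a b : Fin d) :
    ‖((U : Matrix (Fin d) (Fin d) ℂ) a b)‖ ≤ 1 := by
  have h : star (U : Matrix (Fin d) (Fin d) ℂ) * (U : Matrix (Fin d) (Fin d) ℂ) = 1 :=
    Matrix.UnitaryGroup.star_mul_self U
  have h1 := congrArg (fun M : Matrix (Fin d) (Fin d) ℂ => M b b) h
  simp only [Matrix.mul_apply, Matrix.star_apply, Matrix.one_apply_eq] at h1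
  have h2 : ((∑ c, Complex.normSq ((U : Matrix (Fin d) (Fin d) ℂ) c b) : ℝ) : ℂ) = 1 := by
    push_cast
    rw [← h1]
    exact Finset.sum_congr rfl fun c _ => Complex.normSq_eq_conj_mul_self
  have h3 : ∑ c, Complex.normSq ((U : Matrix (Fin d) (Fin d) ℂ) c b) = 1 := by
    exact_mod_cast h2
  have h4 : Complex.normSq ((U : Matrix (Fin d) (Fin d) ℂ) a b) ≤ 1 := by
    rw [← h3]
    exact Finset.single_le_sum (f := fun c => Complex.normSq ((U : Matrix (Fin d) (Fin d) ℂ) c b))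
      (fun c _ => Complex.normSq_nonneg _) (Finset.mem_univ a)
  rw [← Complex.sq_norm] at h4
  nlinarith [norm_nonneg ((U : Matrix (Fin d) (Fin d) ℂ) a b)]

lemma vMap_entry_norm_le (U : UG d) (x : Idx d t) : ‖vMap d t U x‖ ≤ 1 := by
  have hp : ∀ (i j : Fin t → Fin d),
      ‖∏ k, (U : Matrix (Fin d) (Fin d) ℂ) (i k) (j k)‖ ≤ 1 := by
    intro i j
    rw [norm_prod]
    exact Finset.prod_le_one (fun k _ => norm_nonneg _) fun k _ => entry_abs_le_one U _ _
  calc ‖vMap d t U x‖ = ‖∏ k, (U : Matrix (Fin d) (Fin d) ℂ) (x.1.1 k) (x.1.2 k)‖ *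
        ‖∏ k, (U : Matrix (Fin d) (Fin d) ℂ) (x.2.1 k) (x.2.2 k)‖ := by
        rw [vMap, norm_mul, RCLike.norm_conj]
    _ ≤ 1 := mul_le_one₀ (hp _ _) (norm_nonneg _) (hp _ _)

lemma continuous_entryFun (x : Idx d t) : Continuous fun U : UG d => vMap d t U x := by
  refine Continuous.mul ?_ (Continuous.comp continuous_star ?_) <;>
    exact continuous_finset_prod _ fun k _ => continuous_subtype_val.matrix_elem _ _

lemma continuous_vMap : Continuous (vMap d t) := by
  refine Continuous.comp (PiLp.continuous_toLp 2 fun _ : Idx d t => ℂ) ?_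
  exact continuous_pi fun x => continuous_entryFun x

lemma vMap_norm_le (U : UG d) :
    ‖vMap d t U‖ ≤ Real.sqrt (Fintype.card (Idx d t)) := by
  rw [EuclideanSpace.norm_eq]
  apply Real.sqrt_le_sqrt
  calc ∑ x, ‖vMap d t U x‖ ^ 2 ≤ ∑ _x : Idx d t, (1 : ℝ) := by
        refine Finset.sum_le_sum fun x _ => ?_
        have := vMap_entry_norm_le U x
        nlinarith [norm_nonneg (vMap d t U x)]
    _ = Fintype.card (Idx d t) := by simp

lemma trace_eq_sum (U V : UG d) :
    Matrix.trace (star (U : Matrix (Fin d) (Fin d) ℂ) * (V : Matrix (Fin d) (Fin d) ℂ)) =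
      ∑ c : Fin d × Fin d, (starRingEnd ℂ) ((U : Matrix (Fin d) (Fin d) ℂ) c.1 c.2) *
        (V : Matrix (Fin d) (Fin d) ℂ) c.1 c.2 := by
  rw [Matrix.trace]
  simp only [Matrix.diag_apply, Matrix.mul_apply, Matrix.star_apply]
  rw [Fintype.sum_prod_type, Finset.sum_comm]
  rfl

lemma sum_prod_pairs (g : Fin d × Fin d → ℂ) :
    ∑ ij : (Fin t → Fin d) × (Fin t → Fin d), ∏ k, g (ij.1 k, ij.2 k) = (∑ c, g c) ^ t := by
  rw [Fintype.sum_pow]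
  exact Fintype.sum_equiv (Equiv.arrowProdEquivProdArrow (Fin t) (fun _ => Fin d) (fun _ => Fin d)).symm _ _
    (fun p => by simp [Equiv.arrowProdEquivProdArrow])

lemma inner_vMap (U V : UG d) :
    (inner ℂ (vMap d t U) (vMap d t V) : ℂ) =
      ((‖(Matrix.trace (star (U : Matrix (Fin d) (Fin d) ℂ) *
        (V : Matrix (Fin d) (Fin d) ℂ)))‖ ^ (2 * t) : ℝ) : ℂ) := by
  have expand : (inner ℂ (vMap d t U) (vMap d t V) : ℂ) =
      ∑ x : Idx d t,
        (∏ k, ((starRingEnd ℂ) ((U : Matrix (Fin d) (Fin d) ℂ) (x.1.1 k) (x.1.2 k)) *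
            (V : Matrix (Fin d) (Fin d) ℂ) (x.1.1 k) (x.1.2 k))) *
          ∏ k, ((U : Matrix (Fin d) (Fin d) ℂ) (x.2.1 k) (x.2.2 k) *
            (starRingEnd ℂ) ((V : Matrix (Fin d) (Fin d) ℂ) (x.2.1 k) (x.2.2 k))) := by
    rw [PiLp.inner_apply]
    refine Finset.sum_congr rfl fun x _ => ?_
    simp only [RCLike.inner_apply, vMap, map_mul, starRingEnd_self_apply,
      Finset.prod_mul_distrib, map_prod]
    ring
  have h1 : (∑ ij : (Fin t → Fin d) × (Fin t → Fin d),
      ∏ k, ((starRingEnd ℂ) ((U : Matrix (Fin d) (Fin d) ℂ) (ij.1 k) (ij.2 k)) *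
        (V : Matrix (Fin d) (Fin d) ℂ) (ij.1 k) (ij.2 k))) =
      Matrix.trace (star (U : Matrix (Fin d) (Fin d) ℂ) * (V : Matrix (Fin d) (Fin d) ℂ)) ^ t := by
    rw [sum_prod_pairs (fun c => (starRingEnd ℂ) ((U : Matrix (Fin d) (Fin d) ℂ) c.1 c.2) *
      (V : Matrix (Fin d) (Fin d) ℂ) c.1 c.2), trace_eq_sum]
  have h2 : (∑ pq : (Fin t → Fin d) × (Fin t → Fin d),
      ∏ k, ((U : Matrix (Fin d) (Fin d) ℂ) (pq.1 k) (pq.2 k) *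
        (starRingEnd ℂ) ((V : Matrix (Fin d) (Fin d) ℂ) (pq.1 k) (pq.2 k)))) =
      (starRingEnd ℂ) (Matrix.trace (star (U : Matrix (Fin d) (Fin d) ℂ) *
        (V : Matrix (Fin d) (Fin d) ℂ))) ^ t := by
    rw [sum_prod_pairs (fun c => (U : Matrix (Fin d) (Fin d) ℂ) c.1 c.2 *
      (starRingEnd ℂ) ((V : Matrix (Fin d) (Fin d) ℂ) c.1 c.2))]
    congr 1
    rw [trace_eq_sum, map_sum]
    exact Finset.sum_congr rfl fun c _ => by simp [mul_comm]
  have key : (inner ℂ (vMap d t U) (vMap d t V) : ℂ) =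
      Matrix.trace (star (U : Matrix (Fin d) (Fin d) ℂ) * (V : Matrix (Fin d) (Fin d) ℂ)) ^ t *
        (starRingEnd ℂ) (Matrix.trace (star (U : Matrix (Fin d) (Fin d) ℂ) *
          (V : Matrix (Fin d) (Fin d) ℂ))) ^ t := by
    rw [expand, ← h1, ← h2, Finset.sum_mul_sum, Fintype.sum_prod_type]
  rw [key, ← mul_pow, Complex.mul_conj, pow_mul, Complex.sq_norm, Complex.ofReal_pow]

lemma integrable_vMap (μ : Measure (UG d)) [IsFiniteMeasure μ] :
    Integrable (vMap d t) μ := by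
  refine Integrable.mono' (integrable_const (Real.sqrt (Fintype.card (Idx d t))))
    continuous_vMap.aestronglyMeasurable (ae_of_all _ fun U => vMap_norm_le U)

lemma integrable_entryFun (μ : Measure (UG d)) [IsFiniteMeasure μ] (x : Idx d t) :
    Integrable (fun U => vMap d t U x) μ :=
  Integrable.mono' (integrable_const 1) (continuous_entryFun x).aestronglyMeasurable
    (ae_of_all _ fun U => vMap_entry_norm_le U x)

lemma integral_invariance (μ : Measure (UG d)) [μ.IsHaarMeasure] (U : UG d) :
    ∫ V, ‖(Matrix.trace (star (U : Matrix (Fin d) (Fin d) ℂ) *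
      (V : Matrix (Fin d) (Fin d) ℂ)))‖ ^ (2 * t) ∂μ =
    ∫ W, ‖(Matrix.trace ((W : Matrix (Fin d) (Fin d) ℂ)))‖ ^ (2 * t) ∂μ := by
  have h := integral_mul_left_eq_self (μ := μ)
    (fun W : UG d => ‖(Matrix.trace ((W : Matrix (Fin d) (Fin d) ℂ)))‖ ^ (2 * t)) U⁻¹
  rw [← h]
  refine integral_congr_ae (ae_of_all _ fun V => ?_)
  congr 1

lemma monomial_mem (x : Idx d t) :
    (fun U : UG d => vMap d t U x) ∈
      Submodule.span ℂ {f : UG d → ℂ | ∃ (i j : Fin t → Fin d) (p q : Fin t → Fin d),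
        f = fun U : UG d => (∏ k, (U : Matrix (Fin d) (Fin d) ℂ) (i k) (j k)) *
          ∏ k, (starRingEnd ℂ) ((U : Matrix (Fin d) (Fin d) ℂ) (p k) (q k))} := by
  refine Submodule.subset_span ⟨x.1.1, x.1.2, x.2.1, x.2.2, ?_⟩
  funext U
  rw [vMap, PiLp.toLp_apply, map_prod]

end DesignAux

theorem stmt_1 (d t : ℕ) (hd : 1 ≤ d) (ht : 1 ≤ t)
    (μ : Measure (UG d)) [μ.IsHaarMeasure] [IsProbabilityMeasure μ]
    (X : Finset (UG d)) (hX : X.Nonempty) :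
    (1 / (X.card : ℝ) ^ 2) *
        ∑ U ∈ X, ∑ V ∈ X,
          ‖(Matrix.trace (star (U : Matrix (Fin d) (Fin d) ℂ) *
            (V : Matrix (Fin d) (Fin d) ℂ)))‖ ^ (2 * t)
      = ∫ U, ‖(Matrix.trace (U : Matrix (Fin d) (Fin d) ℂ))‖ ^ (2 * t) ∂μ
    ↔ IsUnitaryDesign d t μ X := by
  classical
  have hn0 : 0 < X.card := Finset.card_pos.mpr hX
  have hn : ((X.card : ℂ)) ≠ 0 := Nat.cast_ne_zero.mpr hn0.ne'
  have hv_int : Integrable (DesignAux.vMap d t) μ := DesignAux.integrable_vMap μ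
  set m : EuclideanSpace ℂ (DesignAux.Idx d t) := ∫ U, DesignAux.vMap d t U ∂μ with hm
  set A : EuclideanSpace ℂ (DesignAux.Idx d t) :=
    (1 / (X.card : ℂ)) • ∑ U ∈ X, DesignAux.vMap d t U with hA
  set Cr : ℝ := ∫ U, ‖(Matrix.trace ((U : Matrix (Fin d) (Fin d) ℂ)))‖ ^ (2 * t) ∂μ
    with hCr
  have hvm : ∀ U : UG d, (inner ℂ (DesignAux.vMap d t U) m : ℂ) = (Cr : ℂ) := by
    intro U
    rw [hm, ← integral_inner hv_int (DesignAux.vMap d t U)]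
    simp_rw [DesignAux.inner_vMap]
    have h2 : ∫ V, ((‖(Matrix.trace (star (U : Matrix (Fin d) (Fin d) ℂ) *
        (V : Matrix (Fin d) (Fin d) ℂ)))‖ ^ (2 * t) : ℝ) : ℂ) ∂μ
        = ((∫ V, ‖(Matrix.trace (star (U : Matrix (Fin d) (Fin d) ℂ) *
          (V : Matrix (Fin d) (Fin d) ℂ)))‖ ^ (2 * t) ∂μ : ℝ) : ℂ) :=
      Complex.ofRealLI.integral_comp_comm _
    rw [h2, DesignAux.integral_invariance μ U, hCr]
  have hmv : ∀ W, (inner ℂ m (DesignAux.vMap d t W) : ℂ) = (Cr : ℂ) := fun W => by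
    rw [← inner_conj_symm, hvm W, Complex.conj_ofReal]
  have hmm : (inner ℂ m m : ℂ) = (Cr : ℂ) := by
    have h0 : ∫ W, (inner ℂ m (DesignAux.vMap d t W) : ℂ) ∂μ = inner ℂ m m := by
      rw [integral_inner hv_int m, ← hm]
    rw [← h0]
    simp_rw [hmv]
    simp [measure_univ]
  have hAm : (inner ℂ A m : ℂ) = (Cr : ℂ) := by
    rw [hA, inner_smul_left, sum_inner]
    simp_rw [hvm]
    rw [Finset.sum_const, nsmul_eq_mul, map_div₀, map_one, map_natCast, one_div,
      inv_mul_cancel_left₀ hn]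
  have hmA : (inner ℂ m A : ℂ) = (Cr : ℂ) := by
    rw [← inner_conj_symm, hAm, Complex.conj_ofReal]
  have hAA : (inner ℂ A A : ℂ) =
      (1 / (X.card : ℂ)) ^ 2 * ∑ U ∈ X, ∑ V ∈ X,
        ((‖(Matrix.trace (star (U : Matrix (Fin d) (Fin d) ℂ) *
          (V : Matrix (Fin d) (Fin d) ℂ)))‖ ^ (2 * t) : ℝ) : ℂ) := by
    rw [hA, inner_smul_left, inner_smul_right, sum_inner]
    simp_rw [inner_sum, DesignAux.inner_vMap]
    rw [map_div₀, map_one, map_natCast]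
    ring
  have key : (((1 / (X.card : ℝ) ^ 2) *
      (∑ U ∈ X, ∑ V ∈ X, ‖(Matrix.trace (star (U : Matrix (Fin d) (Fin d) ℂ) *
        (V : Matrix (Fin d) (Fin d) ℂ)))‖ ^ (2 * t)) - Cr : ℝ) : ℂ)
      = (inner ℂ (A - m) (A - m) : ℂ) := by
    rw [inner_sub_sub_self, hAA, hAm, hmA, hmm]
    push_cast
    ring
  have compA : ∀ x : DesignAux.Idx d t,
      A x = (1 / (X.card : ℂ)) * ∑ U ∈ X, DesignAux.vMap d t U x := by
    intro x
    have h1 : A x = EuclideanSpace.proj (𝕜 := ℂ) x A := rfl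
    rw [h1, hA, _root_.map_smul, map_sum]
    simp [smul_eq_mul]
  have compm : ∀ x : DesignAux.Idx d t, m x = ∫ U, DesignAux.vMap d t U x ∂μ := by
    intro x
    have h1 : m x = EuclideanSpace.proj (𝕜 := ℂ) x m := rfl
    rw [h1, hm, ← (EuclideanSpace.proj (𝕜 := ℂ) x).integral_comp_comm hv_int]
    rfl
  have main : (1 / (X.card : ℝ) ^ 2) *
      (∑ U ∈ X, ∑ V ∈ X, ‖(Matrix.trace (star (U : Matrix (Fin d) (Fin d) ℂ) *
        (V : Matrix (Fin d) (Fin d) ℂ)))‖ ^ (2 * t)) = Cr ↔ A = m := by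
    constructor
    · intro h
      have h2 : (inner ℂ (A - m) (A - m) : ℂ) = 0 := by
        rw [← key, h, sub_self, Complex.ofReal_zero]
      exact sub_eq_zero.mp (inner_self_eq_zero.mp h2)
    · intro h
      have h2 : (inner ℂ (A - m) (A - m) : ℂ) = 0 := by
        rw [h, sub_self, inner_zero_left]
      have h3 := key
      rw [h2] at h3
      have h4 : (1 / (X.card : ℝ) ^ 2) *
          (∑ U ∈ X, ∑ V ∈ X, ‖(Matrix.trace (star (U : Matrix (Fin d) (Fin d) ℂ) *
            (V : Matrix (Fin d) (Fin d) ℂ)))‖ ^ (2 * t)) - Cr = 0 := by exact_mod_cast h3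
      linarith
  rw [main]
  constructor
  · intro hAe
    refine ⟨hX, fun f hf => ?_⟩
    have P : Integrable f μ ∧ (1 / (X.card : ℂ)) * ∑ U ∈ X, f U = ∫ U, f U ∂μ := by
      refine Submodule.span_induction
        (p := fun g _ => Integrable g μ ∧
          (1 / (X.card : ℂ)) * ∑ U ∈ X, g U = ∫ U, g U ∂μ) ?_ ?_ ?_ ?_ hf
      · rintro g ⟨i, j, p, q, rfl⟩
        have hg : (fun U : UG d => (∏ k, (U : Matrix (Fin d) (Fin d) ℂ) (i k) (j k)) *
            ∏ k, (starRingEnd ℂ) ((U : Matrix (Fin d) (Fin d) ℂ) (p k) (q k)))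
            = fun U => DesignAux.vMap d t U ((i, j), (p, q)) := by
          funext U
          rw [DesignAux.vMap, PiLp.toLp_apply, map_prod]
        rw [hg]
        exact ⟨DesignAux.integrable_entryFun μ _,
          by rw [← compA, ← compm, hAe]⟩
      · exact ⟨integrable_zero _ _ _, by simp⟩
      · rintro g h _ _ ⟨hgI, hg⟩ ⟨hhI, hh⟩
        refine ⟨hgI.add hhI, ?_⟩
        simp only [Pi.add_apply]
        rw [Finset.sum_add_distrib, mul_add, hg, hh, integral_add hgI hhI]
      · rintro a g _ ⟨hgI, hg⟩
        refine ⟨hgI.smul a, ?_⟩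
        simp only [Pi.smul_apply, smul_eq_mul]
        rw [← Finset.mul_sum, show ∀ z w u : ℂ, z * (w * u) = w * (z * u) from fun _ _ _ => by
          ring, hg, ← integral_const_mul]
    exact P.2
  · intro hD
    ext x
    rw [compA x, compm x]
    exact hD.2 _ (DesignAux.monomial_mem x)
end
end

section
/- For all nonnegative integers r and s, the dimension of Hom(r,s) for U(2) equals the binomial coefficient C(r+s+3, 3). -/
set_option maxRecDepth 8000
set_option maxHeartbeats 1000000


open MeasureTheory

noncomputable section

namespace Stmt5Aux

abbrev Mat := Matrix (Fin 2) (Fin 2) ℂ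

/-- monomial in entries -/
def mon (x : Fin 4 → ℕ) (A : Mat) : ℂ :=
  A 0 0 ^ x 0 * A 0 1 ^ x 1 * A 1 0 ^ x 2 * A 1 1 ^ x 3

lemma star_entries {A : Mat} (hA : A ∈ Matrix.unitaryGroup (Fin 2) ℂ) :
    (starRingEnd ℂ) A.det * A.det = 1 ∧
    (starRingEnd ℂ) (A 0 0) = (starRingEnd ℂ) A.det * A 1 1 ∧
    (starRingEnd ℂ) (A 0 1) = -((starRingEnd ℂ) A.det * A 1 0) ∧
    (starRingEnd ℂ) (A 1 0) = -((starRingEnd ℂ) A.det * A 0 1) ∧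
    (starRingEnd ℂ) (A 1 1) = (starRingEnd ℂ) A.det * A 0 0 := by
  have hdet : (starRingEnd ℂ) A.det * A.det = 1 := by
    have h := (Unitary.mem_iff.mp (Matrix.det_of_mem_unitary hA)).1
    rw [starRingEnd_apply]
    exact h
  have hsA : star A * A = 1 := (Unitary.mem_iff.mp hA).1
  have key : A.det • star A = A.adjugate := by
    calc A.det • star A = star A * (A.det • 1) := by
          rw [mul_smul_comm, mul_one]
      _ = star A * (A * A.adjugate) := by rw [Matrix.mul_adjugate]
      _ = (star A * A) * A.adjugate := by rw [mul_assoc]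
      _ = A.adjugate := by rw [hsA, one_mul]
  have key2 : star A = (starRingEnd ℂ) A.det • A.adjugate := by
    calc star A = ((starRingEnd ℂ) A.det * A.det) • star A := by rw [hdet, one_smul]
      _ = (starRingEnd ℂ) A.det • (A.det • star A) := by rw [mul_smul]
      _ = (starRingEnd ℂ) A.det • A.adjugate := by rw [key]
  have conv : ∀ p q : Fin 2, (starRingEnd ℂ) (A q p) = (starRingEnd ℂ) A.det * A.adjugate p q := by
    intro p q
    have h1 : star A p q = ((starRingEnd ℂ) A.det • A.adjugate) p q := by rw [key2]
    rw [Matrix.star_apply, Matrix.smul_apply, smul_eq_mul] at h1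
    rw [starRingEnd_apply]
    exact h1
  have adj := Matrix.adjugate_fin_two A
  have e00 := conv 0 0
  have e01 := conv 1 0
  have e10 := conv 0 1
  have e11 := conv 1 1
  rw [adj] at e00 e01 e10 e11
  simp only [Matrix.cons_val_zero, Matrix.cons_val_one, Matrix.head_cons, Matrix.of_apply,
    Matrix.cons_val', Matrix.empty_val', Matrix.cons_val_fin_one, Matrix.vecHead] at e00 e01 e10 e11
  exact ⟨hdet, e00, by rw [e01]; ring, by rw [e10]; ring, e11⟩

lemma mon_add (x y : Fin 4 → ℕ) (A : Mat) :
    mon (fun t => x t + y t) A = mon x A * mon y A := by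
  simp only [mon, pow_add]; ring

lemma entry_eq_mon (a b : Fin 2) : ∃ e : Fin 4 → ℕ,
    e 0 + e 1 + e 2 + e 3 = 1 ∧ ∀ A : Mat, A a b = mon e A := by
  fin_cases a <;> fin_cases b
  · exact ⟨![1,0,0,0], by simp, fun A => by simp [mon]⟩
  · exact ⟨![0,1,0,0], by simp, fun A => by simp [mon]⟩
  · exact ⟨![0,0,1,0], by simp, fun A => by simp [mon]⟩
  · exact ⟨![0,0,0,1], by simp, fun A => by simp [mon]⟩

lemma prod_eq_mon : ∀ (r : ℕ) (i j : Fin r → Fin 2), ∃ y : Fin 4 → ℕ,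
    y 0 + y 1 + y 2 + y 3 = r ∧ ∀ A : Mat, (∏ k, A (i k) (j k)) = mon y A := by
  intro r
  induction r with
  | zero => exact fun i j => ⟨fun _ => 0, by simp, fun A => by simp [mon]⟩
  | succ r IH =>
    intro i j
    obtain ⟨y, hy, hmy⟩ := IH (fun k => i k.succ) (fun k => j k.succ)
    obtain ⟨e, he, hme⟩ := entry_eq_mon (i 0) (j 0)
    refine ⟨fun t => e t + y t, ?_, fun A => ?_⟩
    · show e 0 + y 0 + (e 1 + y 1) + (e 2 + y 2) + (e 3 + y 3) = r + 1
      omega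
    · rw [Fin.prod_univ_succ, mon_add, hmy A, hme A]

lemma exists_tuple : ∀ (r : ℕ) (y : Fin 4 → ℕ), y 0 + y 1 + y 2 + y 3 = r →
    ∃ i j : Fin r → Fin 2, ∀ A : Mat, (∏ k, A (i k) (j k)) = mon y A := by
  intro r
  induction r with
  | zero =>
    intro y hy
    refine ⟨Fin.elim0, Fin.elim0, fun A => ?_⟩
    have e0 : y 0 = 0 := by omega
    have e1 : y 1 = 0 := by omega
    have e2 : y 2 = 0 := by omega
    have e3 : y 3 = 0 := by omega
    simp [mon, e0, e1, e2, e3]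
  | succ r IH =>
    intro y hy
    have hcase : y 0 ≠ 0 ∨ y 1 ≠ 0 ∨ y 2 ≠ 0 ∨ y 3 ≠ 0 := by omega
    rcases hcase with h | h | h | h
    · obtain ⟨m, hm⟩ : ∃ m, y 0 = m + 1 := ⟨y 0 - 1, by omega⟩
      obtain ⟨i', j', hij⟩ := IH ![m, y 1, y 2, y 3] (by simp; omega)
      refine ⟨Fin.cons 0 i', Fin.cons 0 j', fun A => ?_⟩
      rw [Fin.prod_univ_succ]
      simp only [Fin.cons_zero, Fin.cons_succ]
      rw [hij A]
      simp [mon, hm, pow_succ]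
      ring
    · obtain ⟨m, hm⟩ : ∃ m, y 1 = m + 1 := ⟨y 1 - 1, by omega⟩
      obtain ⟨i', j', hij⟩ := IH ![y 0, m, y 2, y 3] (by simp; omega)
      refine ⟨Fin.cons 0 i', Fin.cons 1 j', fun A => ?_⟩
      rw [Fin.prod_univ_succ]
      simp only [Fin.cons_zero, Fin.cons_succ]
      rw [hij A]
      simp [mon, hm, pow_succ]
      ring
    · obtain ⟨m, hm⟩ : ∃ m, y 2 = m + 1 := ⟨y 2 - 1, by omega⟩
      obtain ⟨i', j', hij⟩ := IH ![y 0, y 1, m, y 3] (by simp; omega)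
      refine ⟨Fin.cons 1 i', Fin.cons 0 j', fun A => ?_⟩
      rw [Fin.prod_univ_succ]
      simp only [Fin.cons_zero, Fin.cons_succ]
      rw [hij A]
      simp [mon, hm, pow_succ]
      ring
    · obtain ⟨m, hm⟩ : ∃ m, y 3 = m + 1 := ⟨y 3 - 1, by omega⟩
      obtain ⟨i', j', hij⟩ := IH ![y 0, y 1, y 2, m] (by simp; omega)
      refine ⟨Fin.cons 1 i', Fin.cons 1 j', fun A => ?_⟩
      rw [Fin.prod_univ_succ]
      simp only [Fin.cons_zero, Fin.cons_succ]
      rw [hij A]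
      simp [mon, hm, pow_succ]
      ring

lemma mon_map_conj {A : Mat} (hA : A ∈ Matrix.unitaryGroup (Fin 2) ℂ) (z : Fin 4 → ℕ) :
    mon z (A.map (starRingEnd ℂ))
      = (-1 : ℂ)^(z 1 + z 2) * ((starRingEnd ℂ) A.det)^(z 0 + z 1 + z 2 + z 3)
        * mon ![z 3, z 2, z 1, z 0] A := by
  obtain ⟨hdet, h00, h01, h10, h11⟩ := star_entries hA
  simp only [mon, Matrix.map_apply]
  rw [h00, h01, h10, h11]
  simp only [Matrix.cons_val_zero, Matrix.cons_val_one, Matrix.head_cons,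
    Matrix.cons_val_two, Matrix.cons_val_three, Matrix.vecHead, Matrix.vecTail,
    Function.comp_apply, Fin.succ_zero_eq_one, Fin.succ_one_eq_two]
  ring


def gen (s : ℕ) (x : Fin 4 → ℕ) : UG 2 → ℂ :=
  fun U => ((starRingEnd ℂ) (Matrix.det (U : Mat)))^s * mon x (U : Mat)

lemma neg_one_sq_pow (e : ℕ) : ((-1 : ℂ))^e * ((-1 : ℂ))^e = 1 := by
  rw [← pow_add]
  exact Even.neg_one_pow ⟨e, rfl⟩

lemma core (r s : ℕ) (y z : Fin 4 → ℕ) (hz : z 0 + z 1 + z 2 + z 3 = s)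
    (i j : Fin r → Fin 2) (p q : Fin s → Fin 2)
    (hij : ∀ A : Mat, (∏ k, A (i k) (j k)) = mon y A)
    (hpq : ∀ A : Mat, (∏ k, A (p k) (q k)) = mon z A) :
    (fun U : UG 2 => (∏ k, (U : Mat) (i k) (j k)) *
        ∏ k, (starRingEnd ℂ) ((U : Mat) (p k) (q k)))
      = ((-1 : ℂ)^(z 1 + z 2)) • gen s (fun t => y t + ![z 3, z 2, z 1, z 0] t) := by
  funext U
  have hU : (U : Mat) ∈ Matrix.unitaryGroup (Fin 2) ℂ := U.2
  have h1 : (∏ k, (starRingEnd ℂ) ((U : Mat) (p k) (q k)))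
      = mon z ((U : Mat).map (starRingEnd ℂ)) := by
    rw [← hpq ((U : Mat).map (starRingEnd ℂ))]
    simp [Matrix.map_apply]
  have h2 := mon_map_conj hU z
  have h3 : mon (fun t => y t + ![z 3, z 2, z 1, z 0] t) (U : Mat)
      = mon y (U : Mat) * mon ![z 3, z 2, z 1, z 0] (U : Mat) := mon_add _ _ _
  show (∏ k, (U : Mat) (i k) (j k)) * (∏ k, (starRingEnd ℂ) ((U : Mat) (p k) (q k)))
      = (-1 : ℂ)^(z 1 + z 2) * (((starRingEnd ℂ) (Matrix.det (U : Mat)))^s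
          * mon (fun t => y t + ![z 3, z 2, z 1, z 0] t) (U : Mat))
  rw [hij (U : Mat), h1, h2, h3, hz]
  ring

lemma homSpace_le_span (r s : ℕ) :
    homSpace 2 r s ≤ Submodule.span ℂ
      (gen s '' {x : Fin 4 → ℕ | ∑ t, x t = r + s}) := by
  rw [homSpace, Submodule.span_le]
  rintro f ⟨i, j, p, q, rfl⟩
  obtain ⟨y, hy, hij⟩ := prod_eq_mon r i j
  obtain ⟨z, hz, hpq⟩ := prod_eq_mon s p q
  rw [core r s y z hz i j p q hij hpq]
  refine Submodule.smul_mem _ _ (Submodule.subset_span ?_)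
  refine ⟨fun t => y t + ![z 3, z 2, z 1, z 0] t, ?_, rfl⟩
  show (∑ t, (y t + ![z 3, z 2, z 1, z 0] t)) = r + s
  rw [Fin.sum_univ_four]
  simp
  omega

lemma exists_split (r s : ℕ) (x : Fin 4 → ℕ) (hx : x 0 + x 1 + x 2 + x 3 = r + s) :
    ∃ y z : Fin 4 → ℕ, (y 0 + y 1 + y 2 + y 3 = r) ∧ (z 0 + z 1 + z 2 + z 3 = s) ∧
      x = fun t => y t + ![z 3, z 2, z 1, z 0] t := by
  refine ⟨![x 0 - min (x 0) s,
           x 1 - min (x 1) (s - min (x 0) s),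
           x 2 - min (x 2) (s - min (x 0) s - min (x 1) (s - min (x 0) s)),
           x 3 - (s - min (x 0) s - min (x 1) (s - min (x 0) s)
                    - min (x 2) (s - min (x 0) s - min (x 1) (s - min (x 0) s)))],
         ![s - min (x 0) s - min (x 1) (s - min (x 0) s)
              - min (x 2) (s - min (x 0) s - min (x 1) (s - min (x 0) s)),
           min (x 2) (s - min (x 0) s - min (x 1) (s - min (x 0) s)),
           min (x 1) (s - min (x 0) s),
           min (x 0) s], ?_, ?_, ?_⟩
  · simp only [Matrix.cons_val_zero, Matrix.cons_val_one, Matrix.head_cons,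
      Matrix.cons_val_two, Matrix.cons_val_three, Matrix.vecHead, Matrix.vecTail,
      Function.comp_apply, Fin.succ_zero_eq_one, Fin.succ_one_eq_two]
    omega
  · simp only [Matrix.cons_val_zero, Matrix.cons_val_one, Matrix.head_cons,
      Matrix.cons_val_two, Matrix.cons_val_three, Matrix.vecHead, Matrix.vecTail,
      Function.comp_apply, Fin.succ_zero_eq_one, Fin.succ_one_eq_two]
    omega
  · funext t
    fin_cases t <;> simp <;> omega

lemma span_le_homSpace (r s : ℕ) :
    Submodule.span ℂ (gen s '' {x : Fin 4 → ℕ | ∑ t, x t = r + s}) ≤ homSpace 2 r s := by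
  rw [Submodule.span_le]
  rintro f ⟨x, hx, rfl⟩
  have hx4 : x 0 + x 1 + x 2 + x 3 = r + s := by
    rw [← Fin.sum_univ_four x]; exact hx
  obtain ⟨y, z, hy, hz, hxyz⟩ := exists_split r s x hx4
  obtain ⟨i, j, hij⟩ := exists_tuple r y hy
  obtain ⟨p, q, hpq⟩ := exists_tuple s z hz
  have hc := core r s y z hz i j p q hij hpq
  have hgen : gen s x = ((-1 : ℂ)^(z 1 + z 2)) •
      ((fun U : UG 2 => (∏ k, (U : Mat) (i k) (j k)) *
        ∏ k, (starRingEnd ℂ) ((U : Mat) (p k) (q k)))) := by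
    rw [hc, smul_smul, neg_one_sq_pow, one_smul, hxyz]
  rw [SetLike.mem_coe, hgen]
  refine Submodule.smul_mem _ _ ?_
  rw [homSpace]
  exact Submodule.subset_span ⟨i, j, p, q, rfl⟩


lemma circle_infinite : {w : ℂ | (starRingEnd ℂ) w * w = 1}.Infinite := by
  apply Set.infinite_of_injOn_mapsTo (f := fun t : ℝ => Complex.exp (t * Complex.I))
    (s := Set.Ioo (0:ℝ) 1)
  · intro t ht t' ht' hEq
    simp only at hEq
    rw [Complex.exp_eq_exp_iff_exists_int] at hEq
    obtain ⟨k, hk⟩ := hEq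
    have him := congrArg Complex.im hk
    simp [Complex.add_im, Complex.mul_im, Complex.I_im, Complex.I_re,
      Complex.ofReal_re, Complex.ofReal_im] at him
    have hpi := Real.pi_gt_three
    obtain ⟨ht1, ht2⟩ := ht
    obtain ⟨ht1', ht2'⟩ := ht'
    have hk0 : k = 0 := by
      rcases lt_trichotomy k 0 with h | h | h
      · exfalso
        have : (k : ℝ) ≤ -1 := by exact_mod_cast (by omega : k ≤ -1)
        nlinarith
      · exact h
      · exfalso
        have : (1 : ℝ) ≤ (k : ℝ) := by exact_mod_cast h
        nlinarith
    rw [hk0] at him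
    simp at him
    linarith [him]
  · intro t _
    show (starRingEnd ℂ) (Complex.exp (t * Complex.I)) * Complex.exp (t * Complex.I) = 1
    rw [← Complex.exp_conj, ← Complex.exp_add]
    simp [Complex.conj_ofReal]
  · exact Set.Ioo_infinite (show (0:ℝ) < 1 by norm_num)

lemma extract_of_infinite {ι : Type*} (S : Finset ι) (E : ι → ℕ) (d : ι → ℂ)
    (T : Set ℂ) (hT : T.Infinite)
    (h : ∀ w ∈ T, ∑ x ∈ S, d x * w ^ E x = 0) :
    ∀ e, ∑ x ∈ S.filter (fun x => E x = e), d x = 0 := by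
  intro e
  set P : Polynomial ℂ := ∑ x ∈ S, Polynomial.monomial (E x) (d x) with hPdef
  have hP : P = 0 := by
    apply Polynomial.eq_zero_of_infinite_isRoot
    apply hT.mono
    intro w hw
    show P.IsRoot w
    rw [Polynomial.IsRoot, hPdef, Polynomial.eval_finset_sum]
    simp only [Polynomial.eval_monomial]
    exact h w hw
  have hcoeff := congrArg (fun p => Polynomial.coeff p e) hP
  simp only [hPdef, Polynomial.finset_sum_coeff, Polynomial.coeff_monomial,
    Polynomial.coeff_zero] at hcoeff
  rw [Finset.sum_filter]
  exact hcoeff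

lemma circle_extract {ι : Type*} (S : Finset ι) (E : ι → ℕ) (d : ι → ℂ)
    (h : ∀ z : ℂ, (starRingEnd ℂ) z * z = 1 → ∑ x ∈ S, d x * z ^ E x = 0) :
    ∀ e, ∑ x ∈ S.filter (fun x => E x = e), d x = 0 :=
  extract_of_infinite S E d _ circle_infinite (fun w hw => h w hw)

lemma line_extract {ι : Type*} (S : Finset ι) (E : ι → ℕ) (d : ι → ℂ)
    (h : ∀ t : ℝ, ∑ x ∈ S, d x * (t : ℂ) ^ E x = 0) :
    ∀ e, ∑ x ∈ S.filter (fun x => E x = e), d x = 0 := by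
  apply extract_of_infinite S E d (Set.range (fun t : ℝ => (t : ℂ)))
  · exact Set.infinite_range_of_injective Complex.ofReal_injective
  · rintro w ⟨t, rfl⟩
    exact h t

lemma real_circle_extract {ι : Type*} (S : Finset ι) (n : ℕ) (g : ι → ℕ)
    (hg : ∀ x ∈ S, g x ≤ n) (d : ι → ℂ)
    (h : ∀ a b : ℝ, a^2 + b^2 = 1 →
      ∑ x ∈ S, d x * (a : ℂ) ^ g x * (b : ℂ) ^ (n - g x) = 0) :
    ∀ e, ∑ x ∈ S.filter (fun x => g x = e), d x = 0 := by
  apply line_extract S g d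
  intro t
  set r : ℝ := Real.sqrt (t^2+1) with hrdef
  have hr2 : r^2 = t^2+1 := Real.sq_sqrt (by positivity)
  have hr : 0 < r := Real.sqrt_pos.2 (by positivity)
  have hrC : (r : ℂ) ≠ 0 := by
    simpa using hr.ne'
  have hcirc := h (t / r) (1 / r) (by field_simp; linarith)
  have hmul := congrArg (fun zz => ((r : ℂ))^n * zz) hcirc
  simp only [mul_zero] at hmul
  rw [Finset.mul_sum] at hmul
  rw [← hmul]
  apply Finset.sum_congr rfl
  intro x hx
  have hgx := hg x hx
  have hpow : (r : ℂ)^n = (r : ℂ)^(g x) * (r : ℂ)^(n - g x) := by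
    rw [← pow_add]
    congr 1
    omega
  push_cast
  rw [hpow]
  rw [div_pow, div_pow, one_pow]
  have h1 : (r:ℂ)^(g x) ≠ 0 := pow_ne_zero _ hrC
  have h2 : (r:ℂ)^(n - g x) ≠ 0 := pow_ne_zero _ hrC
  field_simp


def Mparam (u v w : ℂ) (a b : ℝ) : Mat :=
  !![u * a, v * b; -(w * b), v * w * (starRingEnd ℂ) u * a]

lemma Mparam_mem {u v w : ℂ} {a b : ℝ} (hu : (starRingEnd ℂ) u * u = 1)
    (hv : (starRingEnd ℂ) v * v = 1) (hw : (starRingEnd ℂ) w * w = 1)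
    (hab : a^2 + b^2 = 1) : Mparam u v w a b ∈ Matrix.unitaryGroup (Fin 2) ℂ := by
  have habC : (a : ℂ)^2 + (b : ℂ)^2 = 1 := by exact_mod_cast congrArg (Complex.ofReal) hab
  rw [Matrix.mem_unitaryGroup_iff]
  ext i j
  fin_cases i <;> fin_cases j
  · simp [Mparam, Matrix.mul_apply, Fin.sum_univ_two, Matrix.one_apply,
      Matrix.conjTranspose_apply, Complex.conj_ofReal, map_mul]
    linear_combination (a:ℂ)^2 * hu + (b:ℂ)^2 * hv + habC
  · simp [Mparam, Matrix.mul_apply, Fin.sum_univ_two, Matrix.one_apply,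
      Matrix.conjTranspose_apply, Complex.conj_ofReal, map_mul]
    linear_combination (u * (starRingEnd ℂ) w * (a:ℂ) * (b:ℂ)) * hv
  · simp [Mparam, Matrix.mul_apply, Fin.sum_univ_two, Matrix.one_apply,
      Matrix.conjTranspose_apply, Complex.conj_ofReal, map_mul]
    linear_combination (w * (starRingEnd ℂ) u * (a:ℂ) * (b:ℂ)) * hv
  · simp [Mparam, Matrix.mul_apply, Fin.sum_univ_two, Matrix.one_apply,
      Matrix.conjTranspose_apply, Complex.conj_ofReal, map_mul]
    linear_combination ((a:ℂ)^2 * ((starRingEnd ℂ) v * v) * ((starRingEnd ℂ) w * w)) * hu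
      + ((a:ℂ)^2 * ((starRingEnd ℂ) v * v)) * hw + (a:ℂ)^2 * hv + (b:ℂ)^2 * hw + habC

lemma detMparam {u v w : ℂ} {a b : ℝ} (hu : (starRingEnd ℂ) u * u = 1)
    (hab : a^2 + b^2 = 1) : (Mparam u v w a b).det = v * w := by
  have habC : (a : ℂ)^2 + (b : ℂ)^2 = 1 := by exact_mod_cast congrArg (Complex.ofReal) hab
  rw [Mparam, Matrix.det_fin_two_of]
  linear_combination (v * w * (a:ℂ)^2) * hu + v * w * habC - v * w * (a:ℂ)^2


lemma gen_eval (s : ℕ) (x : Fin 4 → ℕ) {u v w : ℂ} {a b : ℝ}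
    (hu : (starRingEnd ℂ) u * u = 1) (hv : (starRingEnd ℂ) v * v = 1)
    (hw : (starRingEnd ℂ) w * w = 1) (hab : a^2 + b^2 = 1)
    (U : UG 2) (hU : (U : Mat) = Mparam u v w a b) :
    gen s x U
      = ((-1 : ℂ)^(x 2) * (a:ℂ)^(x 0 + x 3) * (b:ℂ)^(x 1 + x 2))
        * (u^(x 0) * ((starRingEnd ℂ) u)^(x 3) * v^(x 1 + x 3) * w^(x 2 + x 3)
        * ((starRingEnd ℂ) v * (starRingEnd ℂ) w)^s) := by
  have hdet := detMparam (v := v) (w := w) hu hab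
  show ((starRingEnd ℂ) (Matrix.det (U : Mat)))^s * mon x (U : Mat) = _
  rw [hU, hdet, map_mul, mon, Mparam]
  simp only [Matrix.cons_val_zero, Matrix.cons_val_one, Matrix.head_cons, Matrix.of_apply,
    Matrix.cons_val', Matrix.empty_val', Matrix.cons_val_fin_one, Matrix.head_fin_const]
  ring

lemma digit_unique {B a b c a' b' c' : ℕ} (ha : a < B) (ha' : a' < B) (hb : b < B) (hb' : b' < B)
    (h : a + B * b + B * B * c = a' + B * b' + B * B * c') : a = a' ∧ b = b' ∧ c = c' := by
  have h1 : a + B * (b + B * c) = a' + B * (b' + B * c') := by ring_nf; ring_nf at h; omega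
  have haa : a = a' := by
    have e1 : (a + B * (b + B * c)) % B = a % B := Nat.add_mul_mod_self_left a B _
    have e2 : (a' + B * (b' + B * c')) % B = a' % B := Nat.add_mul_mod_self_left a' B _
    rw [Nat.mod_eq_of_lt ha] at e1
    rw [Nat.mod_eq_of_lt ha'] at e2
    rw [h1, e2] at e1
    exact e1.symm
  subst haa
  have hB : 0 < B := by omega
  have h2 : b + B * c = b' + B * c' := by
    have := Nat.add_left_cancel h1
    exact Nat.eq_of_mul_eq_mul_left hB this
  have hbb : b = b' := by
    have e1 : (b + B * c) % B = b % B := Nat.add_mul_mod_self_left b B c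
    have e2 : (b' + B * c') % B = b' % B := Nat.add_mul_mod_self_left b' B c'
    rw [Nat.mod_eq_of_lt hb] at e1
    rw [Nat.mod_eq_of_lt hb'] at e2
    rw [h2, e2] at e1
    exact e1.symm
  subst hbb
  refine ⟨rfl, rfl, ?_⟩
  have := Nat.add_left_cancel h2
  exact Nat.eq_of_mul_eq_mul_left hB this


def Bn (n : ℕ) : ℕ := 2*n+1

def Efun (n : ℕ) (x : Fin 4 → ℕ) : ℕ :=
  (n - x 3 + x 0) + Bn n * (x 1 + x 3) + Bn n * Bn n * (x 2 + x 3)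

lemma term_clear (z : ℂ) (hz : (starRingEnd ℂ) z * z = 1) (n s : ℕ) (x : Fin 4 → ℕ)
    (hx : x 0 + x 1 + x 2 + x 3 = n) (c : ℂ) :
    z^(n + Bn n * s + Bn n * Bn n * s) *
      (c * (z^(x 0) * ((starRingEnd ℂ) z)^(x 3) * (z^(Bn n))^(x 1 + x 3)
        * (z^(Bn n * Bn n))^(x 2 + x 3)
        * ((starRingEnd ℂ) (z^(Bn n)) * (starRingEnd ℂ) (z^(Bn n * Bn n)))^s))
      = c * z^(Efun n x) := by
  set B := Bn n with hB
  have hq : z^(x 3 + (B*s + B*B*s)) * ((starRingEnd ℂ) z)^(x 3 + (B*s + B*B*s)) = 1 := by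
    rw [← mul_pow, mul_comm z, hz, one_pow]
  have hEq : n + B * s + B * B * s + (x 0 + B * (x 1 + x 3) + B * B * (x 2 + x 3))
      = Efun n x + (x 3 + (B * s + B * B * s)) := by
    rw [Efun, ← hB]
    have hx3 : x 3 ≤ n := by omega
    generalize B * s = X1 at *
    generalize B * B * s = X2 at *
    generalize B * (x 1 + x 3) = X3 at *
    generalize B * B * (x 2 + x 3) = X4 at *
    omega
  calc z^(n + B*s + B*B*s) *
      (c * (z^(x 0) * ((starRingEnd ℂ) z)^(x 3) * (z^B)^(x 1 + x 3) * (z^(B*B))^(x 2 + x 3)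
        * ((starRingEnd ℂ) (z^B) * (starRingEnd ℂ) (z^(B*B)))^s))
      = c * (z^(n + B * s + B * B * s + (x 0 + B * (x 1 + x 3) + B * B * (x 2 + x 3)))
          * ((starRingEnd ℂ) z)^(x 3 + (B*s + B*B*s))) := by
        rw [map_pow, map_pow]
        ring
    _ = c * (z^(Efun n x) * (z^(x 3 + (B*s + B*B*s))
          * ((starRingEnd ℂ) z)^(x 3 + (B*s + B*B*s)))) := by
        rw [hEq, pow_add]
        ring
    _ = c * z^(Efun n x) := by rw [hq, mul_one]


instance idxFintype (n : ℕ) : Fintype {P : Fin 4 → ℕ // ∑ i, P i = n} :=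
  Fintype.ofEquiv _ (Sym.equivNatSumOfFintype (Fin 4) n)

lemma sum4 {n : ℕ} (x : {P : Fin 4 → ℕ // ∑ i, P i = n}) :
    x.1 0 + x.1 1 + x.1 2 + x.1 3 = n := by
  have := x.2
  rwa [Fin.sum_univ_four] at this

lemma gen_li (r s : ℕ) :
    LinearIndependent ℂ
      (fun x : {P : Fin 4 → ℕ // ∑ i, P i = r + s} => gen s x.1) := by
  set n := r + s with hn
  rw [Fintype.linearIndependent_iff]
  intro cc hcc x₀
  have hU0 : ∀ U : UG 2, ∑ x : {P : Fin 4 → ℕ // ∑ i, P i = n}, cc x * gen s x.1 U = 0 := by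
    intro U
    have := congrFun hcc U
    simpa [Finset.sum_apply, Pi.smul_apply, smul_eq_mul] using this
  set B := Bn n with hB
  -- Step 1 : circle extraction in z
  have step1 : ∀ (a b : ℝ), a^2 + b^2 = 1 → ∀ e,
      ∑ x ∈ Finset.univ.filter
          (fun x : {P : Fin 4 → ℕ // ∑ i, P i = n} => Efun n x.1 = e),
        cc x * ((-1 : ℂ)^(x.1 2) * (a:ℂ)^(x.1 0 + x.1 3) * (b:ℂ)^(x.1 1 + x.1 2)) = 0 := by
    intro a b hab
    apply circle_extract
    intro z hz
    have hu : (starRingEnd ℂ) z * z = 1 := hz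
    have hv : (starRingEnd ℂ) (z^B) * z^B = 1 := by
      rw [map_pow, ← mul_pow, hz, one_pow]
    have hw : (starRingEnd ℂ) (z^(B*B)) * z^(B*B) = 1 := by
      rw [map_pow, ← mul_pow, hz, one_pow]
    set U : UG 2 := ⟨Mparam z (z^B) (z^(B*B)) a b, Mparam_mem hu hv hw hab⟩ with hUdef
    have hUeq : (U : Mat) = Mparam z (z^B) (z^(B*B)) a b := rfl
    calc ∑ x : {P : Fin 4 → ℕ // ∑ i, P i = n},
          (cc x * ((-1 : ℂ)^(x.1 2) * (a:ℂ)^(x.1 0 + x.1 3) * (b:ℂ)^(x.1 1 + x.1 2)))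
            * z ^ Efun n x.1
        = ∑ x : {P : Fin 4 → ℕ // ∑ i, P i = n},
            z^(n + B * s + B * B * s) * (cc x * gen s x.1 U) := by
          apply Finset.sum_congr rfl
          intro x _
          rw [gen_eval s x.1 hu hv hw hab U hUeq]
          rw [show cc x * (((-1 : ℂ)^(x.1 2) * (a:ℂ)^(x.1 0 + x.1 3) * (b:ℂ)^(x.1 1 + x.1 2))
              * (z^(x.1 0) * ((starRingEnd ℂ) z)^(x.1 3) * (z^B)^(x.1 1 + x.1 3)
                * (z^(B*B))^(x.1 2 + x.1 3)
                * ((starRingEnd ℂ) (z^B) * (starRingEnd ℂ) (z^(B*B)))^s))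
            = (cc x * ((-1 : ℂ)^(x.1 2) * (a:ℂ)^(x.1 0 + x.1 3) * (b:ℂ)^(x.1 1 + x.1 2)))
              * (z^(x.1 0) * ((starRingEnd ℂ) z)^(x.1 3) * (z^B)^(x.1 1 + x.1 3)
                * (z^(B*B))^(x.1 2 + x.1 3)
                * ((starRingEnd ℂ) (z^B) * (starRingEnd ℂ) (z^(B*B)))^s) from by ring]
          rw [term_clear z hz n s x.1 (sum4 x)]
      _ = z^(n + B * s + B * B * s)
            * ∑ x : {P : Fin 4 → ℕ // ∑ i, P i = n}, cc x * gen s x.1 U := by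
          rw [Finset.mul_sum]
      _ = 0 := by rw [hU0 U, mul_zero]
  -- Step 2 : real-circle extraction in (a, b)
  set S : Finset {P : Fin 4 → ℕ // ∑ i, P i = n} :=
    Finset.univ.filter (fun x => Efun n x.1 = Efun n x₀.1) with hS
  have step2 : ∀ e, ∑ x ∈ S.filter (fun x => x.1 0 + x.1 3 = e),
      cc x * (-1 : ℂ)^(x.1 2) = 0 := by
    apply real_circle_extract S n (fun x => x.1 0 + x.1 3)
    · intro x _
      have := sum4 x
      omega
    · intro a b hab
      have h1 := step1 a b hab (Efun n x₀.1)
      rw [← h1]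
      apply Finset.sum_congr rfl
      intro x _
      have hx4 := sum4 x
      rw [show n - (x.1 0 + x.1 3) = x.1 1 + x.1 2 from by omega]
      ring
  have key := step2 (x₀.1 0 + x₀.1 3)
  have hsingle : S.filter (fun x => x.1 0 + x.1 3 = x₀.1 0 + x₀.1 3) = {x₀} := by
    ext x
    simp only [Finset.mem_filter, Finset.mem_singleton, Finset.mem_univ, true_and, hS]
    constructor
    · rintro ⟨hE, hg⟩
      have hx4 := sum4 x
      have hx04 := sum4 x₀
      have hd : (n - x.1 3 + x.1 0) = (n - x₀.1 3 + x₀.1 0)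
          ∧ (x.1 1 + x.1 3) = (x₀.1 1 + x₀.1 3)
          ∧ (x.1 2 + x.1 3) = (x₀.1 2 + x₀.1 3) := by
        apply digit_unique (B := B)
        · have : x.1 0 ≤ n := by omega
          rw [hB, Bn]; omega
        · have : x₀.1 0 ≤ n := by omega
          rw [hB, Bn]; omega
        · rw [hB, Bn]; omega
        · rw [hB, Bn]; omega
        · rw [Efun, Efun, ← hB] at hE
          exact hE
      obtain ⟨hd1, hd2, hd3⟩ := hd
      apply Subtype.ext
      funext t
      have h3 : x.1 3 = x₀.1 3 := by omega
      fin_cases t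
      · show x.1 0 = x₀.1 0
        omega
      · show x.1 1 = x₀.1 1
        omega
      · show x.1 2 = x₀.1 2
        omega
      · show x.1 3 = x₀.1 3
        omega
    · rintro rfl
      exact ⟨rfl, rfl⟩
  rw [hsingle, Finset.sum_singleton] at key
  have hne : ((-1 : ℂ))^(x₀.1 2) ≠ 0 := by
    apply pow_ne_zero
    norm_num
  exact (mul_eq_zero.mp key).resolve_right hne


lemma card_idx (n : ℕ) :
    Fintype.card {P : Fin 4 → ℕ // ∑ i, P i = n} = (n + 3).choose 3 := by
  rw [← Fintype.card_congr (Sym.equivNatSumOfFintype (Fin 4) n)]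
  rw [Sym.card_sym_eq_choose]
  rw [Fintype.card_fin]
  rw [show 4 + n - 1 = n + 3 from by omega]
  rw [← Nat.choose_symm (by omega : n ≤ n + 3)]
  congr 1
  omega

theorem stmt_5' (r s : ℕ) :
    Module.finrank ℂ (homSpace 2 r s) = (r + s + 3).choose 3 := by
  have hspan : homSpace 2 r s
      = Submodule.span ℂ (gen s '' {x : Fin 4 → ℕ | ∑ t, x t = r + s}) :=
    le_antisymm (homSpace_le_span r s) (span_le_homSpace r s)
  have himg : gen s '' {x : Fin 4 → ℕ | ∑ t, x t = r + s}
      = Set.range (fun x : {P : Fin 4 → ℕ // ∑ i, P i = r + s} => gen s x.1) :=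
    Set.image_eq_range _ _
  rw [hspan, himg, finrank_span_eq_card (gen_li r s), card_idx]

end Stmt5Aux

theorem stmt_5 (r s : ℕ) :
    Module.finrank ℂ (homSpace 2 r s) = (r + s + 3).choose 3 :=
  Stmt5Aux.stmt_5' r s
end
end

section
/- If X is a unitary t-design in U(d) (t ≥ 1), then |X| ≥ C(d²+t−1, t), the binomial coefficient counting monomials of degree t in d² variables. -/
open MeasureTheory

noncomputable section

namespace StmtAux

open MvPolynomial Matrix

/-- eval commutes with bind₁. -/
lemma eval_bind₁' {σ τ R : Type*} [CommSemiring R] (x : τ → R)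
    (g : σ → MvPolynomial τ R) (φ : MvPolynomial σ R) :
    eval x (bind₁ g φ) = eval (fun i => eval x (g i)) φ :=
  eval₂Hom_bind₁ (RingHom.id R) x g φ

/-- A polynomial over `ℂ` vanishing at all real points is zero. -/
lemma eq_zero_of_eval_real {σ : Type*} (q : MvPolynomial σ ℂ)
    (h : ∀ x : σ → ℝ, eval (fun i => (x i : ℂ)) q = 0) : q = 0 := by
  classical
  set q1 : MvPolynomial σ ℝ := ∑ m ∈ q.support, monomial m ((coeff m q).re) with hq1
  set q2 : MvPolynomial σ ℝ := ∑ m ∈ q.support, monomial m ((coeff m q).im) with hq2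
  have key : ∀ x : σ → ℝ,
      ((eval x q1 : ℝ) : ℂ) + Complex.I * ((eval x q2 : ℝ) : ℂ)
        = eval (fun i => (x i : ℂ)) q := by
    intro x
    have e1 : eval x q1 = ∑ m ∈ q.support, (coeff m q).re * ∏ i ∈ m.support, x i ^ m i := by
      rw [hq1, map_sum]
      exact Finset.sum_congr rfl fun m _ => by rw [eval_monomial]; rfl
    have e2 : eval x q2 = ∑ m ∈ q.support, (coeff m q).im * ∏ i ∈ m.support, x i ^ m i := by
      rw [hq2, map_sum]
      exact Finset.sum_congr rfl fun m _ => by rw [eval_monomial]; rfl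
    rw [eval_eq (fun i => (x i : ℂ)) q, e1, e2]
    push_cast
    rw [Finset.mul_sum, ← Finset.sum_add_distrib]
    refine Finset.sum_congr rfl fun m _ => ?_
    have hre := Complex.re_add_im (coeff m q)
    calc ((coeff m q).re : ℂ) * ∏ i ∈ m.support, (x i : ℂ) ^ m i
          + Complex.I * (((coeff m q).im : ℂ) * ∏ i ∈ m.support, (x i : ℂ) ^ m i)
        = (((coeff m q).re : ℂ) + ((coeff m q).im : ℂ) * Complex.I)
            * ∏ i ∈ m.support, (x i : ℂ) ^ m i := by ring
      _ = coeff m q * ∏ i ∈ m.support, (x i : ℂ) ^ m i := by rw [hre]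
  have hzero : ∀ x : σ → ℝ, eval x q1 = 0 ∧ eval x q2 = 0 := by
    intro x
    have hx := key x
    rw [h x] at hx
    have hre := congrArg Complex.re hx
    have him := congrArg Complex.im hx
    simp at hre him
    exact ⟨hre, him⟩
  have hq10 : q1 = 0 := MvPolynomial.funext fun x => by rw [(hzero x).1, map_zero]
  have hq20 : q2 = 0 := MvPolynomial.funext fun x => by rw [(hzero x).2, map_zero]
  ext m
  rw [coeff_zero]
  have hco : ∀ (r : (σ →₀ ℕ) → ℝ),
      coeff m (∑ m' ∈ q.support, monomial m' (r m')) = if m ∈ q.support then r m else 0 := by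
    intro r
    rw [MvPolynomial.coeff_sum]
    simp only [coeff_monomial]
    rw [Finset.sum_ite_eq' q.support m r]
  by_cases hm : m ∈ q.support
  · have h1 : (coeff m q).re = 0 := by
      have := hco fun m' => (coeff m' q).re
      rw [← hq1, hq10] at this
      simpa [hm] using this.symm
    have h2 : (coeff m q).im = 0 := by
      have := hco fun m' => (coeff m' q).im
      rw [← hq2, hq20] at this
      simpa [hm] using this.symm
    exact Complex.ext h1 h2
  · exact notMem_support_iff.mp hm

/-- Evaluation of a homogeneous polynomial at a scaled point. -/
lemma eval_smul_of_isHomogeneous {σ : Type*} {p : MvPolynomial σ ℂ} {t : ℕ}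
    (hp : p.IsHomogeneous t) (c : ℂ) (x : σ → ℂ) :
    eval (fun i => c * x i) p = c ^ t * eval x p := by
  rw [eval_eq, eval_eq, Finset.mul_sum]
  refine Finset.sum_congr rfl fun m hm => ?_
  have hdeg : ∑ i ∈ m.support, m i = t := by
    have h1 := hp (MvPolynomial.mem_support_iff.mp hm)
    rw [show (Finsupp.weight (1 : σ → ℕ)) = Finsupp.weight (fun _ => (1 : ℕ)) from rfl,
      ← Finsupp.degree_eq_weight_one] at h1
    exact h1
  calc coeff m p * ∏ i ∈ m.support, (c * x i) ^ m i
      = coeff m p * ((∏ i ∈ m.support, c ^ m i) * ∏ i ∈ m.support, x i ^ m i) := by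
        rw [← Finset.prod_mul_distrib]
        simp [mul_pow]
    _ = c ^ t * (coeff m p * ∏ i ∈ m.support, x i ^ m i) := by
        rw [Finset.prod_pow_eq_pow_sum, hdeg]; ring

/-- Product over a multiset expressed via its `toFinsupp`. -/
lemma multiset_prod_map {σ M : Type*} [DecidableEq σ] [CommMonoid M] (m : Multiset σ)
    (g : σ → M) : (m.map g).prod = m.toFinsupp.prod fun a n => g a ^ n := by
  conv_lhs => rw [← Multiset.toFinsupp_toMultiset m]
  rw [Finsupp.toMultiset_map, Finsupp.prod_toMultiset]
  exact Finsupp.prod_mapDomain_index (fun a => pow_zero a) (fun a n k => pow_add a n k)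

/-- Each size-`t` multiset of index pairs can be enumerated by a tuple. -/
lemma multiset_exists_tuple {d t : ℕ} (m : Multiset (Fin d × Fin d))
    (hm : Multiset.card m = t) :
    ∃ i j : Fin t → Fin d, ∀ g : Fin d × Fin d → ℂ,
      (m.map g).prod = ∏ k : Fin t, g (i k, j k) := by
  have hlen : m.toList.length = t := by rw [Multiset.length_toList]; exact hm
  refine ⟨fun k => (m.toList.get (Fin.cast hlen.symm k)).1,
      fun k => (m.toList.get (Fin.cast hlen.symm k)).2, fun g => ?_⟩
  have h1 : (m.map g).prod = ∏ k : Fin m.toList.length, g (m.toList.get k) := by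
    conv_lhs => rw [← Multiset.coe_toList m]
    rw [Multiset.map_coe, Multiset.prod_coe]
    rw [← List.ofFn_getElem_eq_map m.toList g, List.prod_ofFn]
    rfl
  rw [h1]
  exact (Fin.prod_congr' (fun k => g (m.toList.get k)) hlen.symm).symm

/-- `1 + iA` is invertible for Hermitian `A`. -/
lemma isUnit_one_add_I_smul {d : ℕ} {A : Matrix (Fin d) (Fin d) ℂ} (hA : A.IsHermitian) :
    IsUnit (1 + Complex.I • A).det := by
  rw [isUnit_iff_ne_zero]
  intro hdet
  obtain ⟨v, hv, hmul⟩ := Matrix.exists_mulVec_eq_zero_iff.mpr hdet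
  have h1 : v + Complex.I • (A *ᵥ v) = 0 := by
    have := hmul
    rwa [Matrix.add_mulVec, Matrix.one_mulVec, Matrix.smul_mulVec] at this
  have h2 : star v ⬝ᵥ v + Complex.I * (star v ⬝ᵥ (A *ᵥ v)) = 0 := by
    have h3 := congrArg (fun w => dotProduct (star v) w) h1
    simpa [dotProduct_add, dotProduct_smul, smul_eq_mul] using h3
  set s := star v ⬝ᵥ (A *ᵥ v) with hs
  have e1 : star s = star (A *ᵥ v) ⬝ᵥ v := by
    conv_lhs => rw [hs, Matrix.star_dotProduct, star_star]
  have e2 : star (A *ᵥ v) ⬝ᵥ v = s := by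
    rw [Matrix.star_mulVec, ← Matrix.dotProduct_mulVec, hA.eq]
  have hsstar : star s = s := e1.trans e2
  have hnstar : star (star v ⬝ᵥ v) = star v ⬝ᵥ v := by
    conv_lhs => rw [Matrix.star_dotProduct, star_star]
  have hn : star v ⬝ᵥ v = -(Complex.I * s) := by linear_combination h2
  have hIs : Complex.I * s + Complex.I * s = 0 := by
    have h4 := congrArg star hn
    rw [hnstar, star_neg, star_mul', hsstar, Complex.star_def, Complex.conj_I] at h4
    linear_combination hn - h4
  have hIs0 : Complex.I * s = 0 := add_self_eq_zero.mp hIs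
  have hn0 : star v ⬝ᵥ v = 0 := by rw [hn, hIs0, neg_zero]
  have hsum : ∑ i, Complex.normSq (v i) = 0 := by
    have hcast : (↑(∑ i, Complex.normSq (v i)) : ℂ) = star v ⬝ᵥ v := by
      rw [dotProduct]
      push_cast
      exact Finset.sum_congr rfl fun i _ => by
        rw [Pi.star_apply, Complex.star_def, ← Complex.normSq_eq_conj_mul_self]
    rw [hn0] at hcast
    exact_mod_cast hcast
  refine hv (funext fun i => Complex.normSq_eq_zero.mp ?_)
  exact (Finset.sum_eq_zero_iff_of_nonneg
    (fun i _ => Complex.normSq_nonneg (v i))).mp hsum i (Finset.mem_univ i)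

/-- The Cayley transform of a Hermitian matrix is unitary. -/
lemma cayley_mem_unitary {d : ℕ} {A : Matrix (Fin d) (Fin d) ℂ} (hA : A.IsHermitian) :
    (1 - Complex.I • A) * (1 + Complex.I • A)⁻¹ ∈ Matrix.unitaryGroup (Fin d) ℂ := by
  have hplus : IsUnit (1 + Complex.I • A).det := isUnit_one_add_I_smul hA
  have hminus : IsUnit (1 - Complex.I • A).det := by
    have h' : IsUnit (1 + Complex.I • (-A)).det := isUnit_one_add_I_smul hA.neg
    rw [smul_neg, ← sub_eq_add_neg] at h'
    exact h'
  rw [Matrix.mem_unitaryGroup_iff]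
  have e1 : star (1 - Complex.I • A) = 1 + Complex.I • A := by
    rw [Matrix.star_eq_conjTranspose, Matrix.conjTranspose_sub, Matrix.conjTranspose_smul,
      Matrix.conjTranspose_one, hA.eq, Complex.star_def, Complex.conj_I, neg_smul,
      sub_neg_eq_add]
  have e2 : star ((1 + Complex.I • A)⁻¹) = (1 - Complex.I • A)⁻¹ := by
    rw [Matrix.star_eq_conjTranspose, Matrix.conjTranspose_nonsing_inv]
    congr 1
    rw [Matrix.conjTranspose_add, Matrix.conjTranspose_smul, Matrix.conjTranspose_one,
      hA.eq, Complex.star_def, Complex.conj_I, neg_smul, ← sub_eq_add_neg]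
  rw [StarMul.star_mul, e2, e1]
  have key : ∀ B : Matrix (Fin d) (Fin d) ℂ, (1 - B) * (1 + B) = (1 + B) * (1 - B) :=
    fun B => by noncomm_ring
  have hcomm : (1 - Complex.I • A) * (1 + Complex.I • A)
      = (1 + Complex.I • A) * (1 - Complex.I • A) := key _
  calc (1 - Complex.I • A) * (1 + Complex.I • A)⁻¹
        * ((1 - Complex.I • A)⁻¹ * (1 + Complex.I • A))
      = (1 - Complex.I • A) * ((1 + Complex.I • A)⁻¹ * (1 - Complex.I • A)⁻¹)
        * (1 + Complex.I • A) := by simp only [mul_assoc]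
    _ = (1 - Complex.I • A) * ((1 - Complex.I • A) * (1 + Complex.I • A))⁻¹
        * (1 + Complex.I • A) := by rw [Matrix.mul_inv_rev]
    _ = (1 - Complex.I • A) * ((1 - Complex.I • A)⁻¹ * (1 + Complex.I • A)⁻¹)
        * (1 + Complex.I • A) := by rw [hcomm, Matrix.mul_inv_rev]
    _ = ((1 - Complex.I • A) * (1 - Complex.I • A)⁻¹)
        * ((1 + Complex.I • A)⁻¹ * (1 + Complex.I • A)) := by simp only [mul_assoc]
    _ = 1 := by
        rw [Matrix.mul_nonsing_inv _ hminus, Matrix.nonsing_inv_mul _ hplus, one_mul]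

/-- A polynomial vanishing on all Hermitian matrices is zero. -/
lemma eq_zero_of_eval_hermitian {d : ℕ} (q : MvPolynomial (Fin d × Fin d) ℂ)
    (h : ∀ A : Matrix (Fin d) (Fin d) ℂ, A.IsHermitian → eval (fun s => A s.1 s.2) q = 0) :
    q = 0 := by
  classical
  set P : Fin d × Fin d → MvPolynomial (Fin d × Fin d) ℂ := fun s =>
    if s.1 = s.2 then X s
    else if s.1 < s.2 then X s + C Complex.I * X (s.2, s.1)
    else X (s.2, s.1) - C Complex.I * X s with hP
  have hPd : ∀ a : Fin d, P (a, a) = X (a, a) := by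
    intro a; simp [hP]
  have hPlt : ∀ a b : Fin d, a < b → P (a, b) = X (a, b) + C Complex.I * X (b, a) := by
    intro a b hab
    simp only [hP]
    rw [if_neg (show ¬ ((a, b).1 = (a, b).2) from hab.ne), if_pos hab]
  have hPgt : ∀ a b : Fin d, b < a → P (a, b) = X (b, a) - C Complex.I * X (a, b) := by
    intro a b hab
    simp only [hP]
    rw [if_neg (show ¬ ((a, b).1 = (a, b).2) from hab.ne'), if_neg (asymm hab)]
  have hQ : bind₁ P q = 0 := by
    apply eq_zero_of_eval_real
    intro x
    rw [eval_bind₁']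
    set H : Matrix (Fin d) (Fin d) ℂ :=
      Matrix.of fun j k => eval (fun i => (x i : ℂ)) (P (j, k)) with hH
    have hentry : ∀ a b, H a b = eval (fun i => (x i : ℂ)) (P (a, b)) := fun a b => rfl
    have hHherm : H.IsHermitian := by
      rw [Matrix.IsHermitian]
      ext j k
      rw [Matrix.conjTranspose_apply, hentry, hentry]
      rcases lt_trichotomy j k with hjk | hjk | hjk
      · rw [hPgt k j hjk, hPlt j k hjk]
        simp only [map_sub, map_add, _root_.map_mul, eval_X, eval_C, Complex.star_def,
          Complex.conj_I, map_sub, Complex.conj_ofReal]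
        ring
      · subst hjk
        rw [hPd]
        simp [Complex.conj_ofReal]
      · rw [hPgt j k hjk, hPlt k j hjk]
        simp only [map_sub, map_add, _root_.map_mul, eval_X, eval_C, Complex.star_def,
          Complex.conj_I, Complex.conj_ofReal]
        ring
    have h0 := h H hHherm
    have hpt : (fun s : Fin d × Fin d => H s.1 s.2)
        = fun i : Fin d × Fin d => eval (fun i => (x i : ℂ)) (P i) := by
      funext s
      rw [hentry]
    rw [hpt] at h0
    exact h0
  have hall : ∀ M : Matrix (Fin d) (Fin d) ℂ, eval (fun s => M s.1 s.2) q = 0 := by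
    intro M
    set z : Fin d × Fin d → ℂ := fun s =>
      if s.1 = s.2 then M s.1 s.1
      else if s.1 < s.2 then (M s.1 s.2 + M s.2 s.1) / 2
      else (M s.2 s.1 - M s.1 s.2) / (2 * Complex.I) with hz
    have hzd : ∀ a : Fin d, z (a, a) = M a a := by intro a; simp [hz]
    have hzlt : ∀ a b : Fin d, a < b → z (a, b) = (M a b + M b a) / 2 := by
      intro a b hab
      simp only [hz]
      rw [if_neg (show ¬ ((a, b).1 = (a, b).2) from hab.ne), if_pos hab]
    have hzgt : ∀ a b : Fin d, b < a → z (a, b) = (M b a - M a b) / (2 * Complex.I) := by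
      intro a b hab
      simp only [hz]
      rw [if_neg (show ¬ ((a, b).1 = (a, b).2) from hab.ne'), if_neg (asymm hab)]
    have h1 : eval z (bind₁ P q) = 0 := by rw [hQ, map_zero]
    rw [eval_bind₁'] at h1
    have hpt : (fun i : Fin d × Fin d => eval z (P i)) = fun s : Fin d × Fin d => M s.1 s.2 := by
      funext s
      obtain ⟨a, b⟩ := s
      rcases lt_trichotomy a b with hab | hab | hab
      · rw [hPlt a b hab]
        simp only [map_add, _root_.map_mul, eval_X, eval_C]
        rw [hzlt a b hab, hzgt b a hab]
        field_simp
        ring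
      · subst hab
        rw [hPd, eval_X, hzd]
      · rw [hPgt a b hab]
        simp only [map_sub, _root_.map_mul, eval_X, eval_C]
        rw [hzlt b a hab, hzgt a b hab]
        field_simp
        ring
    rw [hpt] at h1
    exact h1
  apply MvPolynomial.funext
  intro x
  have h5 := hall (Matrix.of fun j k => x (j, k))
  rw [map_zero]
  exact h5

/-- A homogeneous polynomial vanishing on the unitary group is zero. -/
lemma entries_smul {d : ℕ} (c : ℂ) (M : Matrix (Fin d) (Fin d) ℂ) :
    (fun s : Fin d × Fin d => (c • M) s.1 s.2) = fun s : Fin d × Fin d => c * M s.1 s.2 := by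
  funext s
  simp [Matrix.smul_apply]

/-- Evaluation of a matrix of polynomials. -/
lemma eval_mapMatrix_eq {d : ℕ} (x : Fin d × Fin d → ℂ)
    (N : Matrix (Fin d) (Fin d) (MvPolynomial (Fin d × Fin d) ℂ)) (j k : Fin d) :
    eval x (N j k) = ((eval x : MvPolynomial (Fin d × Fin d) ℂ →+* ℂ).mapMatrix N) j k := by
  rw [RingHom.mapMatrix_apply, Matrix.map_apply]

lemma zariski {d t : ℕ} (p : MvPolynomial (Fin d × Fin d) ℂ) (hp : p.IsHomogeneous t)
    (h : ∀ U : Matrix (Fin d) (Fin d) ℂ, U ∈ Matrix.unitaryGroup (Fin d) ℂ →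
      eval (fun s => U s.1 s.2) p = 0) : p = 0 := by
  classical
  set Xm : Matrix (Fin d) (Fin d) (MvPolynomial (Fin d × Fin d) ℂ) :=
    Matrix.of fun j k => X (j, k) with hXm
  set N : Matrix (Fin d) (Fin d) (MvPolynomial (Fin d × Fin d) ℂ) :=
    (1 - (C Complex.I : MvPolynomial (Fin d × Fin d) ℂ) • Xm) * Matrix.adjugate (1 + (C Complex.I : MvPolynomial (Fin d × Fin d) ℂ) • Xm) with hN
  set q := bind₁ (fun s : Fin d × Fin d => N s.1 s.2) p with hq
  -- evaluating q at a matrix B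
  have hmap : ∀ B : Matrix (Fin d) (Fin d) ℂ,
      ((eval (fun s : Fin d × Fin d => B s.1 s.2) :
          MvPolynomial (Fin d × Fin d) ℂ →+* ℂ).mapMatrix N)
        = (1 - Complex.I • B) * Matrix.adjugate (1 + Complex.I • B) := by
    intro B
    set E := (eval (fun s : Fin d × Fin d => B s.1 s.2) :
      MvPolynomial (Fin d × Fin d) ℂ →+* ℂ) with hE
    have e1 : E.mapMatrix (1 - (C Complex.I : MvPolynomial (Fin d × Fin d) ℂ) • Xm) = 1 - Complex.I • B := by
      ext j k
      rw [RingHom.mapMatrix_apply, Matrix.map_apply]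
      simp only [Matrix.sub_apply, Matrix.smul_apply, Matrix.one_apply, hXm, Matrix.of_apply,
        smul_eq_mul, map_sub, _root_.map_mul, hE, eval_C, apply_ite, _root_.map_one, _root_.map_zero, eval_X]
    have e2 : E.mapMatrix (1 + (C Complex.I : MvPolynomial (Fin d × Fin d) ℂ) • Xm) = 1 + Complex.I • B := by
      ext j k
      rw [RingHom.mapMatrix_apply, Matrix.map_apply]
      simp only [Matrix.add_apply, Matrix.smul_apply, Matrix.one_apply, hXm, Matrix.of_apply,
        smul_eq_mul, map_add, _root_.map_mul, hE, eval_C, apply_ite, _root_.map_one, _root_.map_zero, eval_X]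
    rw [hN, _root_.map_mul, e1, RingHom.map_adjugate, e2]
  have hqeval : ∀ B : Matrix (Fin d) (Fin d) ℂ,
      eval (fun s : Fin d × Fin d => B s.1 s.2) q
        = eval (fun s : Fin d × Fin d =>
            (((1 - Complex.I • B) * Matrix.adjugate (1 + Complex.I • B) :
              Matrix (Fin d) (Fin d) ℂ)) s.1 s.2) p := by
    intro B
    rw [hq, eval_bind₁']
    have harg : (fun i : Fin d × Fin d =>
        eval (fun s : Fin d × Fin d => B s.1 s.2) (N i.1 i.2))
        = fun s : Fin d × Fin d =>
            (((1 - Complex.I • B) * Matrix.adjugate (1 + Complex.I • B) :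
              Matrix (Fin d) (Fin d) ℂ)) s.1 s.2 := by
      funext s
      rw [eval_mapMatrix_eq, hmap]
    rw [harg]
  -- q vanishes on Hermitian matrices
  have hherm : ∀ A : Matrix (Fin d) (Fin d) ℂ, A.IsHermitian →
      eval (fun s : Fin d × Fin d => A s.1 s.2) q = 0 := by
    intro A hA
    rw [hqeval]
    have hdet : IsUnit (1 + Complex.I • A).det := isUnit_one_add_I_smul hA
    have hadj : (1 - Complex.I • A) * (1 + Complex.I • A).adjugate
        = (1 + Complex.I • A).det • ((1 - Complex.I • A) * (1 + Complex.I • A)⁻¹) := by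
      have e3 : (1 + Complex.I • A).adjugate
          = (1 + Complex.I • A).det • (1 + Complex.I • A)⁻¹ := by
        rw [Matrix.inv_def, smul_smul, Ring.mul_inverse_cancel _ hdet, one_smul]
      rw [e3, Matrix.mul_smul]
    rw [hadj, entries_smul, eval_smul_of_isHomogeneous hp,
      h _ (cayley_mem_unitary hA), mul_zero]
  have hq0 : q = 0 := eq_zero_of_eval_hermitian q hherm
  -- p vanishes whenever 1 + M is invertible
  have hpM : ∀ M : Matrix (Fin d) (Fin d) ℂ, IsUnit (1 + M).det →
      eval (fun s : Fin d × Fin d => M s.1 s.2) p = 0 := by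
    intro M hM
    set T := (1 + M)⁻¹ with hT
    set B := (-Complex.I) • (T * (1 - M)) with hB
    have hIB : Complex.I • B = T * (1 - M) := by
      rw [hB, smul_smul]
      norm_num [Complex.I_mul_I]
    have hMT : T * M = M * T := by
      have h5 : M * (1 + M) = (1 + M) * M := by noncomm_ring
      have h6 : (1 + M) * T = 1 := Matrix.mul_nonsing_inv _ hM
      have h7 : T * (1 + M) = 1 := Matrix.nonsing_inv_mul _ hM
      calc T * M = T * M * ((1 + M) * T) := by rw [h6, mul_one]
        _ = T * (M * (1 + M)) * T := by simp only [mul_assoc]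
        _ = T * ((1 + M) * M) * T := by rw [h5]
        _ = (T * (1 + M)) * (M * T) := by simp only [mul_assoc]
        _ = M * T := by rw [h7, one_mul]
    have h2s : (1 + M) + (1 - M) = (2 : ℂ) • (1 : Matrix (Fin d) (Fin d) ℂ) := by
      module
    have h2m : (1 + M) - (1 - M) = (2 : ℂ) • M := by
      module
    have hplusB : 1 + Complex.I • B = (2 : ℂ) • T := by
      rw [hIB]
      have h7 : T * (1 + M) = 1 := Matrix.nonsing_inv_mul _ hM
      calc 1 + T * (1 - M) = T * (1 + M) + T * (1 - M) := by rw [h7]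
        _ = T * ((1 + M) + (1 - M)) := (mul_add T _ _).symm
        _ = T * ((2 : ℂ) • 1) := by rw [h2s]
        _ = (2 : ℂ) • T := by rw [mul_smul_comm, mul_one]
    have hminusB : 1 - Complex.I • B = (2 : ℂ) • (T * M) := by
      rw [hIB]
      have h7 : T * (1 + M) = 1 := Matrix.nonsing_inv_mul _ hM
      calc 1 - T * (1 - M) = T * (1 + M) - T * (1 - M) := by rw [h7]
        _ = T * ((1 + M) - (1 - M)) := (mul_sub T _ _).symm
        _ = T * ((2 : ℂ) • M) := by rw [h2m]
        _ = (2 : ℂ) • (T * M) := by rw [mul_smul_comm]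
    have hval := hqeval B
    rw [hq0, map_zero] at hval
    have hexp : (1 - Complex.I • B) * Matrix.adjugate (1 + Complex.I • B)
        = (((2 : ℂ) ^ d * T.det)) • M := by
      rw [hminusB, hplusB, Matrix.adjugate_smul]
      rw [smul_mul_assoc, Matrix.mul_smul, smul_smul]
      rw [hMT, mul_assoc, Matrix.mul_adjugate, Matrix.mul_smul, mul_one, smul_smul]
      rw [Fintype.card_fin]
      rcases Nat.eq_zero_or_pos d with hd | hd
      · subst hd
        ext i j
        exact i.elim0
      · congr 2
        rw [← pow_succ', Nat.sub_add_cancel hd]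
    have hunit : (2 : ℂ) ^ d * T.det ≠ 0 :=
      mul_ne_zero (pow_ne_zero _ two_ne_zero)
        (Matrix.isUnit_nonsing_inv_det _ hM).ne_zero
    rw [hexp, entries_smul, eval_smul_of_isHomogeneous hp] at hval
    exact (mul_eq_zero.mp hval.symm).resolve_left (pow_ne_zero _ hunit)
  -- conclude p = 0
  have hPD : p * (1 + Xm).det = 0 := by
    apply MvPolynomial.funext
    intro x
    set Mx : Matrix (Fin d) (Fin d) ℂ := Matrix.of fun j k => x (j, k) with hMx
    have hxeq : x = fun s : Fin d × Fin d => Mx s.1 s.2 := by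
      funext s; rfl
    have hdet : eval x ((1 + Xm).det)
        = (1 + Mx).det := by
      rw [RingHom.map_det]
      congr 1
      ext j k
      rw [RingHom.mapMatrix_apply, Matrix.map_apply]
      simp only [Matrix.add_apply, Matrix.one_apply, hXm, Matrix.of_apply, map_add,
        apply_ite, _root_.map_one, _root_.map_zero, eval_X, hMx]
    rw [_root_.map_mul, map_zero, hdet]
    by_cases hu : IsUnit (1 + Mx).det
    · rw [hxeq, hpM Mx hu, zero_mul]
    · rw [isUnit_iff_ne_zero, not_not] at hu
      rw [hu, mul_zero]
  have hD : (1 + Xm).det ≠ 0 := by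
    intro h0
    have h1 := congrArg (eval (fun _ : Fin d × Fin d => (0 : ℂ))) h0
    rw [map_zero, RingHom.map_det] at h1
    have h2 : ((eval (fun _ : Fin d × Fin d => (0 : ℂ)) :
        MvPolynomial (Fin d × Fin d) ℂ →+* ℂ).mapMatrix (1 + Xm)) = 1 := by
      ext j k
      rw [RingHom.mapMatrix_apply, Matrix.map_apply]
      simp [Matrix.add_apply, Matrix.one_apply, hXm, apply_ite]
    rw [h2, Matrix.det_one] at h1
    exact one_ne_zero h1
  rcases mul_eq_zero.mp hPD with h11 | h11
  · exact h11
  · exact absurd h11 hD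

/-- The unitary group is a compact subset. -/
lemma isCompact_ug (d : ℕ) :
    IsCompact (Matrix.unitaryGroup (Fin d) ℂ : Set (Matrix (Fin d) (Fin d) ℂ)) := by
  have hbig : IsCompact (Set.univ.pi fun _ : Fin d =>
      Set.univ.pi fun _ : Fin d => Metric.closedBall (0 : ℂ) 1) :=
    isCompact_univ_pi fun _ => isCompact_univ_pi fun _ => isCompact_closedBall 0 1
  refine IsCompact.of_isClosed_subset hbig ?_ ?_
  · have heq : (Matrix.unitaryGroup (Fin d) ℂ : Set (Matrix (Fin d) (Fin d) ℂ))
        = (fun A : Matrix (Fin d) (Fin d) ℂ => A * star A) ⁻¹' {1} := by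
      ext A
      simp [Matrix.mem_unitaryGroup_iff, Set.mem_preimage]
    rw [heq]
    exact IsClosed.preimage (Continuous.matrix_mul continuous_id continuous_star)
      isClosed_singleton
  · intro A hA
    intro i _
    intro j _
    rw [Metric.mem_closedBall, dist_zero_right]
    exact entry_norm_bound_of_unitary hA i j

instance (d : ℕ) : CompactSpace (UG d) :=
  isCompact_iff_compactSpace.mp (isCompact_ug d)

end StmtAux

open MvPolynomial

theorem stmt_8 (d t : ℕ) (ht : 1 ≤ t)
    (μ : Measure (UG d)) [μ.IsHaarMeasure] [IsProbabilityMeasure μ]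
    (X : Finset (UG d)) (hX : IsUnitaryDesign d t μ X) :
    (d ^ 2 + t - 1).choose t ≤ X.card := by
  classical
  obtain ⟨hXne, hdesign⟩ := hX
  set F : Sym (Fin d × Fin d) t → UG d → ℂ := fun s U =>
    ((s : Multiset (Fin d × Fin d)).map
      (fun pr => (U : Matrix (Fin d) (Fin d) ℂ) pr.1 pr.2)).prod with hFdef
  choose I J hIJ using fun s : Sym (Fin d × Fin d) t =>
    StmtAux.multiset_exists_tuple (s : Multiset (Fin d × Fin d)) s.prop
  have hFtuple : ∀ s U, F s U
      = ∏ k : Fin t, (U : Matrix (Fin d) (Fin d) ℂ) (I s k) (J s k) := by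
    intro s U
    exact hIJ s (fun pr => (U : Matrix (Fin d) (Fin d) ℂ) pr.1 pr.2)
  have hFcont : ∀ s, Continuous (F s) := by
    intro s
    have h1 : Continuous fun U : UG d =>
        ∏ k : Fin t, (U : Matrix (Fin d) (Fin d) ℂ) (I s k) (J s k) :=
      continuous_finset_prod _ fun k _ =>
        (continuous_apply (J s k)).comp
          ((continuous_apply (I s k)).comp continuous_subtype_val)
    have he : F s = fun U : UG d => ∏ k : Fin t,
        (U : Matrix (Fin d) (Fin d) ℂ) (I s k) (J s k) := funext fun U => hFtuple s U
    rw [he]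
    exact h1
  have hLI : LinearIndependent ℂ (fun s : Sym (Fin d × Fin d) t => fun x : ↥X => F s ↑x) := by
    rw [Fintype.linearIndependent_iff]
    intro c hc
    set f : UG d → ℂ := fun U => ∑ s : Sym (Fin d × Fin d) t, c s * F s U with hfdef
    have hfX : ∀ U ∈ X, f U = 0 := by
      intro U hU
      have h2 := congrFun hc ⟨U, hU⟩
      simpa [hfdef, Finset.sum_apply, Pi.smul_apply, smul_eq_mul] using h2
    set g : UG d → ℂ := fun U => f U * (starRingEnd ℂ) (f U) with hgdef
    have hgmem : g ∈ homSpace d t t := by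
      have hgeq : g = ∑ s : Sym (Fin d × Fin d) t, ∑ s' : Sym (Fin d × Fin d) t,
          (c s * (starRingEnd ℂ) (c s')) •
          (fun U : UG d => (∏ k, (U : Matrix (Fin d) (Fin d) ℂ) (I s k) (J s k)) *
            ∏ k, (starRingEnd ℂ) ((U : Matrix (Fin d) (Fin d) ℂ) (I s' k) (J s' k))) := by
        funext U
        simp only [hgdef, hfdef, Finset.sum_apply, Pi.smul_apply, smul_eq_mul]
        rw [map_sum, Finset.sum_mul_sum]
        refine Finset.sum_congr rfl fun s _ => Finset.sum_congr rfl fun s' _ => ?_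
        rw [_root_.map_mul, hFtuple, hFtuple, map_prod]
        ring
      rw [hgeq]
      refine Submodule.sum_mem _ fun s _ => Submodule.sum_mem _ fun s' _ =>
        Submodule.smul_mem _ _ (Submodule.subset_span ?_)
      exact ⟨I s, J s, I s', J s', rfl⟩
    have hdes := hdesign g hgmem
    have hsum0 : ∑ U ∈ X, g U = 0 := Finset.sum_eq_zero fun U hU => by
      simp [hgdef, hfX U hU]
    rw [hsum0, mul_zero] at hdes
    have hint : ∫ U, g U ∂μ = ((∫ U, Complex.normSq (f U) ∂μ : ℝ) : ℂ) := by
      have hgreal : ∀ U, g U = ((Complex.normSq (f U) : ℝ) : ℂ) := fun U =>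
        Complex.mul_conj (f U)
      simp_rw [hgreal]
      exact integral_ofReal
    rw [hint] at hdes
    have hreal0 : ∫ U, Complex.normSq (f U) ∂μ = 0 := by exact_mod_cast hdes.symm
    have hfcont : Continuous f := by
      rw [hfdef]
      exact continuous_finset_sum _ fun s _ => continuous_const.mul (hFcont s)
    have hnScont : Continuous fun U : UG d => Complex.normSq (f U) :=
      Complex.continuous_normSq.comp hfcont
    have hintg : Integrable (fun U : UG d => Complex.normSq (f U)) μ :=
      hnScont.integrable_of_hasCompactSupport
        (IsClosed.isCompact (isClosed_tsupport _))
    have hae : (fun U : UG d => Complex.normSq (f U)) =ᵐ[μ] 0 :=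
      (integral_eq_zero_iff_of_nonneg (fun U => Complex.normSq_nonneg _) hintg).mp hreal0
    have hzero : (fun U : UG d => Complex.normSq (f U)) = 0 :=
      (Continuous.ae_eq_iff_eq μ hnScont continuous_const).mp hae
    have hf0 : ∀ V : UG d, f V = 0 := fun V =>
      Complex.normSq_eq_zero.mp (congrFun hzero V)
    set p : MvPolynomial (Fin d × Fin d) ℂ :=
      ∑ s : Sym (Fin d × Fin d) t,
        c s • monomial (Multiset.toFinsupp (s : Multiset (Fin d × Fin d))) (1 : ℂ) with hpdef
    have hphom : p.IsHomogeneous t := by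
      have hmem : p ∈ homogeneousSubmodule (Fin d × Fin d) ℂ t := by
        rw [hpdef]
        refine Submodule.sum_mem _ fun s _ => Submodule.smul_mem _ _ ?_
        rw [mem_homogeneousSubmodule]
        refine isHomogeneous_monomial _ ?_
        have hdeg : (Multiset.toFinsupp (s : Multiset (Fin d × Fin d))).degree
            = Multiset.card (s : Multiset (Fin d × Fin d)) := by
          rw [← Multiset.toFinsupp_sum_eq]
          rfl
        rw [hdeg]
        exact s.prop
      exact (mem_homogeneousSubmodule _ _).mp hmem
    have hpeval : ∀ V : UG d,
        eval (fun pr : Fin d × Fin d => (V : Matrix (Fin d) (Fin d) ℂ) pr.1 pr.2) p = f V := by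
      intro V
      rw [hpdef, map_sum, hfdef]
      refine Finset.sum_congr rfl fun s _ => ?_
      rw [smul_eq_C_mul, _root_.map_mul, eval_C, eval_monomial, one_mul]
      exact congrArg (fun y => c s * y) (StmtAux.multiset_prod_map _ _).symm
    have hpzero : p = 0 := by
      refine StmtAux.zariski p hphom fun Um hU => ?_
      have h3 := hpeval ⟨Um, hU⟩
      rwa [hf0 ⟨Um, hU⟩] at h3
    intro s₀
    have hcval : coeff (Multiset.toFinsupp ((s₀ : Multiset (Fin d × Fin d)))) p = c s₀ := by
      rw [hpdef, MvPolynomial.coeff_sum]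
      rw [Finset.sum_eq_single s₀]
      · rw [MvPolynomial.coeff_smul, coeff_monomial, if_pos rfl, smul_eq_mul, mul_one]
      · intro s _ hne
        rw [MvPolynomial.coeff_smul, coeff_monomial, if_neg, smul_eq_mul, mul_zero]
        intro heq
        exact hne (Sym.coe_injective (Multiset.toFinsupp.injective heq))
      · intro habs
        exact absurd (Finset.mem_univ s₀) habs
    rw [hpzero, coeff_zero] at hcval
    exact hcval.symm
  have hcard := hLI.fintype_card_le_finrank
  rw [Module.finrank_fintype_fun_eq_card, Fintype.card_coe] at hcard
  calc (d ^ 2 + t - 1).choose t = Nat.multichoose (d ^ 2) t := (Nat.multichoose_eq _ _).symm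
    _ = Nat.multichoose (Fintype.card (Fin d × Fin d)) t := by
        rw [Fintype.card_prod, Fintype.card_fin, pow_two]
    _ = Fintype.card (Sym (Fin d × Fin d) t) := (Sym.card_sym_eq_multichoose _ _).symm
    _ ≤ X.card := hcard
end
end
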